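/- arXiv:2412.18568 — 4 statements merged into one kernel-verified Lean document; each statement's English description precedes it below -/
import Mathlib

section
/- Let Y = τ·z + X₀·β₀ + ε be a random vector in ℝⁿ with ε integrable, E[ε] = 0 and E[ε εᵀ] = σ²·Iₙ. For i = 1, 2, let X_i be an n×d_i real matrix, and suppose the column space of X₀ is contained in that of X₂, the column space of X₂ is contained in that of X₁, each D_i = [z X_i] has full column rank d_i + 1, and d_i + 1 < n. Define σ̂²_i = [Yᵀ(Iₙ − D_i(D_iᵀD_i)⁻¹D_iᵀ)Y/(n − d_i − 1)] · e₁ᵀ(D_iᵀD_i)⁻¹e₁, where e₁ is the first standard basis vector. Then E[σ̂²₁] ≥ E[σ̂²₂]. -/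
open MeasureTheory Matrix

lemma gram_isUnit {n m : ℕ} (D : Matrix (Fin n) (Fin m) ℝ) (h : D.rank = m) :
    IsUnit (Dᵀ * D).det := by
  rw [← Matrix.isUnit_iff_isUnit_det, ← Matrix.mulVec_surjective_iff_isUnit]
  have hr : (Dᵀ * D).rank = m := by rw [Matrix.rank_transpose_mul_self, h]
  have htop : LinearMap.range (Dᵀ * D).mulVecLin = ⊤ := by
    apply Submodule.eq_top_of_finrank_eq
    rw [← Matrix.rank, hr]
    simp [Module.finrank_pi]
  intro v
  obtain ⟨w, hw⟩ := LinearMap.range_eq_top.mp htop v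
  exact ⟨w, hw⟩

lemma gram_inv_entry_nonneg_and_sq_le {n m : ℕ} (D : Matrix (Fin n) (Fin (m+1)) ℝ)
    (hdet : IsUnit (Dᵀ * D).det) :
    0 ≤ (Dᵀ * D)⁻¹ 0 0 ∧
      ((Dᵀ * D)⁻¹.mulVec (Pi.single 0 1)) 0 = (Dᵀ * D)⁻¹ 0 0 ∧
      D.mulVec ((Dᵀ * D)⁻¹.mulVec (Pi.single 0 1)) ⬝ᵥ
        D.mulVec ((Dᵀ * D)⁻¹.mulVec (Pi.single 0 1)) = (Dᵀ * D)⁻¹ 0 0 ∧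
      ∀ u : Fin (m+1) → ℝ,
        (u 0)^2 ≤ (Dᵀ * D)⁻¹ 0 0 * (D.mulVec u ⬝ᵥ D.mulVec u) := by
  set S := Dᵀ * D with hS
  have hSsymm : Sᵀ = S := by
    rw [hS, Matrix.transpose_mul, Matrix.transpose_transpose]
  have hSinvsymm : (S⁻¹)ᵀ = S⁻¹ := by
    rw [Matrix.transpose_nonsing_inv, hSsymm]
  set a : Fin (m+1) → ℝ := S⁻¹.mulVec (Pi.single 0 1) with ha
  have hSa : S.mulVec a = Pi.single 0 1 := by
    rw [ha, Matrix.mulVec_mulVec, Matrix.mul_nonsing_inv _ hdet, Matrix.one_mulVec]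
  have ha0 : a 0 = S⁻¹ 0 0 := by
    rw [ha, Matrix.mulVec_single_one]
    rfl
  -- key : for any vectors v w, D.mulVec v ⬝ᵥ D.mulVec w = v ⬝ᵥ S.mulVec w
  have hkey : ∀ v w : Fin (m+1) → ℝ, D.mulVec v ⬝ᵥ D.mulVec w = v ⬝ᵥ S.mulVec w := by
    intro v w
    rw [hS, ← Matrix.mulVec_mulVec, Matrix.dotProduct_mulVec v Dᵀ, Matrix.vecMul_transpose]
  have hc : D.mulVec a ⬝ᵥ D.mulVec a = S⁻¹ 0 0 := by
    rw [hkey, hSa, dotProduct_single, mul_one, ha0]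
  have hnn : 0 ≤ S⁻¹ 0 0 := by
    rw [← hc]
    exact Finset.sum_nonneg fun i _ => mul_self_nonneg _
  refine ⟨hnn, ha0, hc, fun u => ?_⟩
  have hu0 : D.mulVec a ⬝ᵥ D.mulVec u = u 0 := by
    rw [hkey, Matrix.dotProduct_mulVec]
    rw [show a ᵥ* S = S.mulVec a by nth_rewrite 1 [← hSsymm]; rw [Matrix.vecMul_transpose], hSa,
      single_dotProduct, one_mul]
  have hcs := Finset.sum_mul_sq_le_sq_mul_sq Finset.univ (D.mulVec a) (D.mulVec u)
  calc (u 0)^2 = (D.mulVec a ⬝ᵥ D.mulVec u)^2 := by rw [hu0]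
    _ ≤ (D.mulVec a ⬝ᵥ D.mulVec a) * (D.mulVec u ⬝ᵥ D.mulVec u) := by
        simpa [dotProduct, pow_two] using hcs
    _ = S⁻¹ 0 0 * (D.mulVec u ⬝ᵥ D.mulVec u) := by rw [hc]

lemma integral_quadform {Ω : Type*} [MeasurableSpace Ω] (μ : Measure Ω)
    {n : ℕ} (σ : ℝ) (ε : Ω → Fin n → ℝ)
    (hε2int : ∀ i j, Integrable (fun ω => ε ω i * ε ω j) μ)
    (hεcov : ∀ i j, ∫ ω, ε ω i * ε ω j ∂μ = if i = j then σ ^ 2 else 0)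
    (A : Matrix (Fin n) (Fin n) ℝ) :
    ∫ ω, ε ω ⬝ᵥ A.mulVec (ε ω) ∂μ = σ ^ 2 * A.trace := by
  have hfun : ∀ ω, ε ω ⬝ᵥ A.mulVec (ε ω) = ∑ i, ∑ j, A i j * (ε ω i * ε ω j) := by
    intro ω
    simp only [dotProduct, Matrix.mulVec, Finset.mul_sum]
    exact Finset.sum_congr rfl fun i _ => Finset.sum_congr rfl fun j _ => by ring
  simp_rw [hfun]
  rw [MeasureTheory.integral_finset_sum _ (fun i _ =>
    MeasureTheory.integrable_finset_sum _ (fun j _ => (hε2int i j).const_mul (A i j)))]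
  have : ∀ i, ∫ ω, ∑ j, A i j * (ε ω i * ε ω j) ∂μ = A i i * σ ^ 2 := by
    intro i
    rw [MeasureTheory.integral_finset_sum _ (fun j _ => (hε2int i j).const_mul _)]
    have : ∀ j, ∫ ω, A i j * (ε ω i * ε ω j) ∂μ = A i j * (if i = j then σ^2 else 0) := by
      intro j
      rw [MeasureTheory.integral_const_mul, hεcov]
    simp_rw [this, mul_ite, mul_zero]
    simp
  simp_rw [this]
  rw [Matrix.trace, Finset.mul_sum]
  exact Finset.sum_congr rfl fun i _ => by rw [Matrix.diag_apply]; ring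

lemma integral_resid {Ω : Type*} [MeasurableSpace Ω] (μ : Measure Ω)
    {n : ℕ} (σ : ℝ) (ε : Ω → Fin n → ℝ)
    (hε2int : ∀ i j, Integrable (fun ω => ε ω i * ε ω j) μ)
    (hεcov : ∀ i j, ∫ ω, ε ω i * ε ω j ∂μ = if i = j then σ ^ 2 else 0)
    (mvec : Fin n → ℝ) (Y : Ω → Fin n → ℝ)
    (hY : ∀ ω i, Y ω i = mvec i + ε ω i)
    {m : ℕ} (D : Matrix (Fin n) (Fin m) ℝ) (hdet : IsUnit (Dᵀ * D).det)
    (γ : Fin m → ℝ) (hm : mvec = D.mulVec γ) :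
    ∫ ω, Y ω ⬝ᵥ (1 - D * (Dᵀ * D)⁻¹ * Dᵀ).mulVec (Y ω) ∂μ = σ ^ 2 * ((n : ℝ) - m) := by
  set S := Dᵀ * D with hS
  set A := 1 - D * S⁻¹ * Dᵀ with hA
  have hSsymm : Sᵀ = S := by rw [hS, Matrix.transpose_mul, Matrix.transpose_transpose]
  have hPD : D * S⁻¹ * Dᵀ * D = D := by
    rw [Matrix.mul_assoc (D * S⁻¹), Matrix.mul_assoc D, ← hS,
      Matrix.nonsing_inv_mul _ hdet, Matrix.mul_one]
  have hAm : A.mulVec mvec = 0 := by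
    rw [hm, Matrix.mulVec_mulVec, hA, Matrix.sub_mul, Matrix.one_mul, hPD, sub_self,
      Matrix.zero_mulVec]
  have hAsymm : Aᵀ = A := by
    rw [hA, Matrix.transpose_sub, Matrix.transpose_one, Matrix.transpose_mul,
      Matrix.transpose_mul, Matrix.transpose_transpose, Matrix.transpose_nonsing_inv,
      hSsymm, Matrix.mul_assoc]
  have hpoint : ∀ ω, Y ω ⬝ᵥ A.mulVec (Y ω) = ε ω ⬝ᵥ A.mulVec (ε ω) := by
    intro ω
    have hYω : Y ω = mvec + ε ω := funext fun i => hY ω i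
    rw [hYω, Matrix.mulVec_add, hAm, zero_add, add_dotProduct]
    have : mvec ⬝ᵥ A.mulVec (ε ω) = 0 := by
      rw [Matrix.dotProduct_mulVec, show mvec ᵥ* A = A.mulVec mvec by
        nth_rewrite 1 [← hAsymm]; rw [Matrix.vecMul_transpose], hAm,
        zero_dotProduct]
    rw [this, zero_add]
  have htr : A.trace = (n : ℝ) - m := by
    rw [hA, Matrix.trace_sub, Matrix.trace_one]
    have : (D * S⁻¹ * Dᵀ).trace = (m : ℝ) := by
      rw [Matrix.mul_assoc, Matrix.trace_mul_comm, Matrix.mul_assoc, ← hS,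
        Matrix.nonsing_inv_mul _ hdet, Matrix.trace_one]
      simp
    rw [this]
    simp
  calc ∫ ω, Y ω ⬝ᵥ A.mulVec (Y ω) ∂μ = ∫ ω, ε ω ⬝ᵥ A.mulVec (ε ω) ∂μ := by simp_rw [hpoint]
    _ = σ ^ 2 * A.trace := integral_quadform μ σ ε hε2int hεcov A
    _ = σ ^ 2 * ((n : ℝ) - m) := by rw [htr]

set_option maxHeartbeats 2000000 in
/-- Proposition 1 (variance-monotonicity part): in the model `Y = τ·z + X₀β₀ + ε`
with `E[ε] = 0` and `E[εεᵀ] = σ²Iₙ`, if the column spaces satisfy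
`col(X₀) ⊆ col(X₂) ⊆ col(X₁)`, each augmented design `Dᵢ = [z Xᵢ]` has full column
rank `dᵢ + 1 < n`, then the expected squared standard error
`σ̂²ᵢ = [Yᵀ(I − Dᵢ(DᵢᵀDᵢ)⁻¹Dᵢᵀ)Y/(n − dᵢ − 1)]·e₁ᵀ(DᵢᵀDᵢ)⁻¹e₁`
satisfies `E[σ̂²₁] ≥ E[σ̂²₂]`. -/
theorem adet_ols_variance_monotone
    {Ω : Type*} [MeasurableSpace Ω] (μ : Measure Ω) [IsProbabilityMeasure μ]
    {n d₀ d₁ d₂ : ℕ} (τ σ : ℝ) (z : Fin n → ℝ)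
    (X₀ : Matrix (Fin n) (Fin d₀) ℝ) (β₀ : Fin d₀ → ℝ)
    (X₁ : Matrix (Fin n) (Fin d₁) ℝ) (X₂ : Matrix (Fin n) (Fin d₂) ℝ)
    (M₀ : Matrix (Fin d₂) (Fin d₀) ℝ) (hX₀ : X₀ = X₂ * M₀)
    (M₂ : Matrix (Fin d₁) (Fin d₂) ℝ) (hX₂ : X₂ = X₁ * M₂)
    (ε : Ω → Fin n → ℝ)
    (hεint : ∀ i, Integrable (fun ω => ε ω i) μ)
    (hεmean : ∀ i, ∫ ω, ε ω i ∂μ = 0)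
    (hε2int : ∀ i j, Integrable (fun ω => ε ω i * ε ω j) μ)
    (hεcov : ∀ i j, ∫ ω, ε ω i * ε ω j ∂μ = if i = j then σ ^ 2 else 0)
    (Y : Ω → Fin n → ℝ)
    (hY : ∀ ω i, Y ω i = τ * z i + X₀.mulVec β₀ i + ε ω i)
    (D₁ : Matrix (Fin n) (Fin (d₁ + 1)) ℝ)
    (hD₁ : ∀ i j, D₁ i j = Fin.cases (z i) (fun k => X₁ i k) j)
    (D₂ : Matrix (Fin n) (Fin (d₂ + 1)) ℝ)
    (hD₂ : ∀ i j, D₂ i j = Fin.cases (z i) (fun k => X₂ i k) j)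
    (hrank₁ : D₁.rank = d₁ + 1) (hrank₂ : D₂.rank = d₂ + 1)
    (hd₁ : d₁ + 1 < n) (hd₂ : d₂ + 1 < n) :
    (∫ ω, (Y ω ⬝ᵥ (1 - D₁ * (D₁ᵀ * D₁)⁻¹ * D₁ᵀ).mulVec (Y ω)) / ((n : ℝ) - d₁ - 1)
        * ((D₁ᵀ * D₁)⁻¹ 0 0) ∂μ) ≥
      ∫ ω, (Y ω ⬝ᵥ (1 - D₂ * (D₂ᵀ * D₂)⁻¹ * D₂ᵀ).mulVec (Y ω)) / ((n : ℝ) - d₂ - 1)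
        * ((D₂ᵀ * D₂)⁻¹ 0 0) ∂μ := by
  have hdet₁ : IsUnit (D₁ᵀ * D₁).det := gram_isUnit D₁ hrank₁
  have hdet₂ : IsUnit (D₂ᵀ * D₂).det := gram_isUnit D₂ hrank₂
  set mvec : Fin n → ℝ := fun i => τ * z i + X₀.mulVec β₀ i with hmvec
  have hY' : ∀ ω i, Y ω i = mvec i + ε ω i := fun ω i => hY ω i
  -- mean is in each design's column space
  have hmean₂ : mvec = D₂.mulVec (Fin.cons τ (M₀.mulVec β₀)) := by
    funext i
    rw [hmvec]
    rw [show D₂.mulVec (Fin.cons τ (M₀.mulVec β₀)) i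
        = ∑ j, D₂ i j * (Fin.cons τ (M₀.mulVec β₀) : Fin (d₂+1) → ℝ) j from rfl, Fin.sum_univ_succ]
    simp only [hD₂, Fin.cons_zero, Fin.cons_succ, Fin.cases_zero, Fin.cases_succ]
    rw [show ∑ k, X₂ i k * M₀.mulVec β₀ k = X₂.mulVec (M₀.mulVec β₀) i from rfl,
      Matrix.mulVec_mulVec, ← hX₀]
    ring
  have hmean₁ : mvec = D₁.mulVec (Fin.cons τ ((M₂ * M₀).mulVec β₀)) := by
    funext i
    rw [hmvec]
    rw [show D₁.mulVec (Fin.cons τ ((M₂ * M₀).mulVec β₀)) i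
        = ∑ j, D₁ i j * (Fin.cons τ ((M₂ * M₀).mulVec β₀) : Fin (d₁+1) → ℝ) j from rfl, Fin.sum_univ_succ]
    simp only [hD₁, Fin.cons_zero, Fin.cons_succ, Fin.cases_zero, Fin.cases_succ]
    rw [show ∑ k, X₁ i k * (M₂ * M₀).mulVec β₀ k = X₁.mulVec ((M₂ * M₀).mulVec β₀) i from rfl,
      Matrix.mulVec_mulVec, ← Matrix.mul_assoc, ← hX₂, ← hX₀]
    ring
  -- value of each integral
  have hval : ∀ (d : ℕ) (D : Matrix (Fin n) (Fin (d + 1)) ℝ)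
      (hdet : IsUnit (Dᵀ * D).det) (γ : Fin (d + 1) → ℝ)
      (hm : mvec = D.mulVec γ) (hd : d + 1 < n),
      ∫ ω, (Y ω ⬝ᵥ (1 - D * (Dᵀ * D)⁻¹ * Dᵀ).mulVec (Y ω)) / ((n : ℝ) - d - 1)
        * ((Dᵀ * D)⁻¹ 0 0) ∂μ = σ ^ 2 * ((Dᵀ * D)⁻¹ 0 0) := by
    intro d D hdet γ hm hd
    have hI := integral_resid μ σ ε hε2int hεcov mvec Y hY' D hdet γ hm
    have ht : (n : ℝ) - d - 1 ≠ 0 := by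
      have : (d : ℝ) + 1 < n := by exact_mod_cast hd
      linarith
    calc ∫ ω, (Y ω ⬝ᵥ (1 - D * (Dᵀ * D)⁻¹ * Dᵀ).mulVec (Y ω)) / ((n : ℝ) - d - 1)
          * ((Dᵀ * D)⁻¹ 0 0) ∂μ
        = ∫ ω, (Y ω ⬝ᵥ (1 - D * (Dᵀ * D)⁻¹ * Dᵀ).mulVec (Y ω))
            * (((Dᵀ * D)⁻¹ 0 0) / ((n : ℝ) - d - 1)) ∂μ := by
          congr 1; funext ω; rw [div_mul_eq_mul_div, mul_div_assoc]
      _ = (∫ ω, Y ω ⬝ᵥ (1 - D * (Dᵀ * D)⁻¹ * Dᵀ).mulVec (Y ω) ∂μ)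
            * (((Dᵀ * D)⁻¹ 0 0) / ((n : ℝ) - d - 1)) := by
          rw [MeasureTheory.integral_mul_const]
      _ = σ ^ 2 * ((n : ℝ) - (d + 1)) * (((Dᵀ * D)⁻¹ 0 0) / ((n : ℝ) - d - 1)) := by
          rw [hI]; push_cast; ring_nf
      _ = σ ^ 2 * ((Dᵀ * D)⁻¹ 0 0) := by
          field_simp
          ring
  rw [hval d₁ D₁ hdet₁ _ hmean₁ hd₁, hval d₂ D₂ hdet₂ _ hmean₂ hd₂]
  -- monotonicity of the inverse-Gram corner entry
  obtain ⟨hnn₁, -, -, hsq₁⟩ := gram_inv_entry_nonneg_and_sq_le D₁ hdet₁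
  obtain ⟨hnn₂, hw0, hww, -⟩ := gram_inv_entry_nonneg_and_sq_le D₂ hdet₂
  set w : Fin (d₂ + 1) → ℝ := (D₂ᵀ * D₂)⁻¹.mulVec (Pi.single 0 1) with hw
  set u : Fin (d₁ + 1) → ℝ := Fin.cons (w 0) (M₂.mulVec (fun k => w k.succ)) with hu
  have hDu : D₁.mulVec u = D₂.mulVec w := by
    funext i
    rw [show D₁.mulVec u i = ∑ j, D₁ i j * u j from rfl,
      show D₂.mulVec w i = ∑ j, D₂ i j * w j from rfl, Fin.sum_univ_succ,
      Fin.sum_univ_succ]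
    simp only [hD₁, hD₂, hu, Fin.cons_zero, Fin.cons_succ, Fin.cases_zero, Fin.cases_succ]
    rw [show ∑ k, X₁ i k * M₂.mulVec (fun k => w k.succ) k
        = X₁.mulVec (M₂.mulVec (fun k => w k.succ)) i from rfl, Matrix.mulVec_mulVec, ← hX₂]
    rfl
  have hu0 : u 0 = (D₂ᵀ * D₂)⁻¹ 0 0 := by rw [hu, Fin.cons_zero, ← hw0]
  have hkey := hsq₁ u
  rw [hDu, hww, hu0] at hkey
  have hmono : (D₂ᵀ * D₂)⁻¹ 0 0 ≤ (D₁ᵀ * D₁)⁻¹ 0 0 := by nlinarith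
  exact mul_le_mul_of_nonneg_left hmono (sq_nonneg σ)
end

section
/- Let ι be a countable type and p : ι → ℝ a probability mass function (p ≥ 0 and Σ_{k} p(k) = 1), and let K be a random variable on a probability space with values in ι such that P(K = k) = p(k) for all k. Define F(k) = Σ_{k' : p(k') ≤ p(k)} p(k'). Then for every α ∈ (0,1), P(F(K) ≥ α) ≥ 1 − α. -/
open MeasureTheory

/-- Proposition 2 (discrete pmf level-set coverage): if `K` is a discrete random
variable with pmf `p` on a countable type, and `F k = Σ_{k' : p k' ≤ p k} p k'`,
then `P(F(K) ≥ α) ≥ 1 − α` for every `α ∈ (0,1)`. -/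
theorem pmf_level_set_coverage
    {Ω ι : Type*} [MeasurableSpace Ω] [Countable ι]
    [MeasurableSpace ι] [MeasurableSingletonClass ι]
    (μ : Measure Ω) [IsProbabilityMeasure μ]
    (p : ι → ℝ) (hp0 : ∀ k, 0 ≤ p k) (hp1 : ∑' k, p k = 1)
    (K : Ω → ι) (hK : Measurable K)
    (hPK : ∀ k, μ {ω | K ω = k} = ENNReal.ofReal (p k))
    (α : ℝ) (hα0 : 0 < α) (hα1 : α < 1) :
    ENNReal.ofReal (1 - α) ≤
      μ {ω | α ≤ ∑' k', if p k' ≤ p (K ω) then p k' else 0} := by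
  classical
  have hsum : Summable p := by
    by_contra h
    rw [tsum_eq_zero_of_not_summable h] at hp1
    norm_num at hp1
  set F : ι → ℝ := fun k => ∑' k', if p k' ≤ p k then p k' else 0 with hF
  set A : Set ι := {k | F k < α} with hA
  have hgnn : ∀ k k', 0 ≤ (if p k' ≤ p k then p k' else 0) := by
    intro k k'; split
    · exact hp0 k'
    · exact le_refl 0
  have hgsum : ∀ k, Summable (fun k' => if p k' ≤ p k then p k' else 0) := by
    intro k
    refine Summable.of_nonneg_of_le (hgnn k) (fun k' => ?_) hsum
    split
    · exact le_refl _
    · exact hp0 k'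
  -- key combinatorial bound
  have hkey : ∑' (a : A), p a ≤ α := by
    apply Summable.tsum_le_of_sum_le (hsum.subtype A)
    intro (S : Finset A)
    rcases S.eq_empty_or_nonempty with rfl | hS
    · simpa using hα0.le
    · obtain ⟨a0, ha0S, ha0max⟩ := S.exists_max_image (fun a => p (a : ι)) hS
      have hinj : Set.InjOn (Subtype.val : A → ι) S := fun x _ y _ h => Subtype.ext h
      have h1 : ∑ a ∈ S, p (a : ι) = ∑ k ∈ S.image Subtype.val,
          (if p k ≤ p (a0 : ι) then p k else 0) := by
        rw [Finset.sum_image (fun x hx y hy h => hinj hx hy h)]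
        refine Finset.sum_congr rfl (fun a ha => ?_)
        rw [if_pos (ha0max a ha)]
      have h2 : ∑ k ∈ S.image Subtype.val, (if p k ≤ p (a0 : ι) then p k else 0)
          ≤ F (a0 : ι) :=
        Summable.sum_le_tsum _ (fun k _ => hgnn _ k) (hgsum (a0 : ι))
      have h3 : F (a0 : ι) < α := a0.2
      calc ∑ i ∈ S, (p ∘ Subtype.val) i = ∑ a ∈ S, p (a : ι) := rfl
        _ ≤ α := by rw [h1]; linarith
  -- measurability
  have hAm : MeasurableSet A := (Set.to_countable A).measurableSet
  have hμA : μ (K ⁻¹' A) ≤ ENNReal.ofReal α := by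
    have hcover : K ⁻¹' A = ⋃ k ∈ A, {ω | K ω = k} := by
      ext ω; simp [Set.mem_preimage]
    rw [hcover]
    calc μ (⋃ k ∈ A, {ω | K ω = k})
        ≤ ∑' k : A, μ {ω | K ω = (k : ι)} :=
          measure_biUnion_le μ (Set.to_countable A) _
      _ = ∑' k : A, ENNReal.ofReal (p (k : ι)) := by
          simp only [hPK]
      _ = ENNReal.ofReal (∑' k : A, p (k : ι)) :=
          (ENNReal.ofReal_tsum_of_nonneg (fun k => hp0 _) (hsum.subtype A)).symm
      _ ≤ ENNReal.ofReal α := ENNReal.ofReal_le_ofReal hkey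
  have hset : {ω | α ≤ F (K ω)} = (K ⁻¹' A)ᶜ := by
    ext ω; simp [hA, not_lt]
  rw [hset, measure_compl (hK hAm) (measure_ne_top μ _)]
  have : ENNReal.ofReal (1 - α) = 1 - ENNReal.ofReal α := by
    rw [ENNReal.ofReal_sub _ hα0.le, ENNReal.ofReal_one]
  rw [this, measure_univ]
  exact tsub_le_tsub_left hμA 1
end

section
/- For every natural number m ≥ 1, π/(m + 1) < ∫₀^π (sin x)^m dx < 2·(1/(m + 1) + π/2 − 1), and moreover 2·(1/(m + 1) + π/2 − 1) < 4. -/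
open Real intervalIntegral

lemma sin_pow_symm (m : ℕ) :
    (∫ x in (0:ℝ)..Real.pi, Real.sin x ^ m) = 2 * ∫ x in (0:ℝ)..(Real.pi/2), Real.sin x ^ m := by
  have hsplit : (∫ x in (0:ℝ)..Real.pi, Real.sin x ^ m)
      = (∫ x in (0:ℝ)..(Real.pi/2), Real.sin x ^ m)
        + ∫ x in (Real.pi/2)..Real.pi, Real.sin x ^ m := by
    rw [intervalIntegral.integral_add_adjacent_intervals] <;>
      exact (Real.continuous_sin.pow m).intervalIntegrable _ _
  have hrefl : (∫ x in (Real.pi/2)..Real.pi, Real.sin x ^ m)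
      = ∫ x in (0:ℝ)..(Real.pi/2), Real.sin x ^ m := by
    have h := intervalIntegral.integral_comp_sub_left (a := (0:ℝ)) (b := Real.pi/2)
      (fun x => Real.sin x ^ m) Real.pi
    simp only [Real.sin_pi_sub] at h
    rw [show Real.pi - Real.pi/2 = Real.pi/2 by ring, sub_zero] at h
    exact h.symm
  rw [hsplit, hrefl]; ring

/-- Bounds on the normalizing constant `∫₀^π sinᵐ x dx` from the proof of the angle
lemma: `π/(m+1) < ∫₀^π sinᵐ x dx < 2(1/(m+1) + π/2 − 1) < 4` for every `m ≥ 1`. -/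
theorem integral_sin_pow_bounds (m : ℕ) (hm : 1 ≤ m) :
    (Real.pi / ((m : ℝ) + 1) < ∫ x in (0 : ℝ)..Real.pi, Real.sin x ^ m) ∧
      ((∫ x in (0 : ℝ)..Real.pi, Real.sin x ^ m) <
        2 * (1 / ((m : ℝ) + 1) + Real.pi / 2 - 1)) ∧
      (2 * (1 / ((m : ℝ) + 1) + Real.pi / 2 - 1) < 4) := by
  have hm1 : (0:ℝ) < (m:ℝ) + 1 := by positivity
  have hpi2 : (0:ℝ) < Real.pi / 2 := Real.pi_div_two_pos
  have hpi3 : (3:ℝ) < Real.pi := Real.pi_gt_three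
  have hm0 : m ≠ 0 := by omega
  refine ⟨?_, ?_, ?_⟩
  · -- lower bound
    rw [sin_pow_symm]
    have hlow : (∫ x in (0:ℝ)..(Real.pi/2), (2 / Real.pi * x) ^ m)
        < ∫ x in (0:ℝ)..(Real.pi/2), Real.sin x ^ m := by
      apply intervalIntegral.integral_lt_integral_of_continuousOn_of_le_of_exists_lt hpi2
      · exact ((continuous_const.mul continuous_id).pow m).continuousOn
      · exact (Real.continuous_sin.pow m).continuousOn
      · intro x hx
        exact pow_le_pow_left₀ (mul_nonneg (by positivity) hx.1.le)
          (Real.mul_le_sin hx.1.le hx.2) m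
      · refine ⟨Real.pi/4, ⟨by positivity, by linarith⟩, ?_⟩
        have h1 : 2 / Real.pi * (Real.pi/4) = 1/2 := by
          field_simp; ring
        rw [h1, Real.sin_pi_div_four]
        have h2 : (1:ℝ)/2 < Real.sqrt 2 / 2 := by
          have : (1:ℝ) < Real.sqrt 2 := by
            rw [show (1:ℝ) = Real.sqrt 1 by simp]
            exact Real.sqrt_lt_sqrt (by norm_num) (by norm_num)
          linarith
        exact pow_lt_pow_left₀ h2 (by norm_num) hm0
    have hval : (∫ x in (0:ℝ)..(Real.pi/2), (2 / Real.pi * x) ^ m)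
        = (Real.pi/2) / ((m:ℝ) + 1) := by
      simp only [mul_pow]
      rw [intervalIntegral.integral_const_mul, integral_pow]
      have hkey : (2 / Real.pi)^m * (Real.pi/2)^(m+1) = Real.pi/2 := by
        rw [pow_succ, ← mul_assoc, ← mul_pow,
          show 2 / Real.pi * (Real.pi/2) = 1 by field_simp]
        simp
      rw [zero_pow (by omega)]
      push_cast
      rw [sub_zero, ← mul_div_assoc, hkey]
    rw [hval] at hlow
    have : Real.pi / ((m:ℝ) + 1) = 2 * ((Real.pi/2) / ((m:ℝ) + 1)) := by ring
    rw [this]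
    linarith
  · -- upper bound
    rw [sin_pow_symm]
    have hup : (∫ x in (0:ℝ)..(Real.pi/2), Real.sin x ^ m)
        < ∫ x in (0:ℝ)..(Real.pi/2), (min x 1) ^ m := by
      apply intervalIntegral.integral_lt_integral_of_continuousOn_of_le_of_exists_lt hpi2
      · exact (Real.continuous_sin.pow m).continuousOn
      · exact ((continuous_id.min continuous_const).pow m).continuousOn
      · intro x hx
        refine pow_le_pow_left₀ (Real.sin_nonneg_of_nonneg_of_le_pi hx.1.le (by linarith [hx.2])) ?_ m
        exact le_min (Real.sin_le hx.1.le) (Real.sin_le_one x)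
      · refine ⟨1, ⟨by norm_num, by linarith⟩, ?_⟩
        have h1 : Real.sin 1 < 1 := lt_of_lt_of_le (Real.sin_lt one_pos) le_rfl
        have := pow_lt_pow_left₀ h1 (Real.sin_nonneg_of_nonneg_of_le_pi zero_le_one
          (by linarith)) hm0
        simpa using this
    have hmin : (∫ x in (0:ℝ)..(Real.pi/2), (min x 1) ^ m)
        = 1 / ((m:ℝ) + 1) + (Real.pi/2 - 1) := by
      have hsplit : (∫ x in (0:ℝ)..(Real.pi/2), (min x 1) ^ m)
          = (∫ x in (0:ℝ)..(1:ℝ), (min x 1) ^ m)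
            + ∫ x in (1:ℝ)..(Real.pi/2), (min x 1) ^ m := by
        rw [intervalIntegral.integral_add_adjacent_intervals] <;>
          exact (((continuous_id.min continuous_const).pow m).intervalIntegrable _ _)
      have h1 : (∫ x in (0:ℝ)..(1:ℝ), (min x 1) ^ m) = 1 / ((m:ℝ) + 1) := by
        rw [intervalIntegral.integral_congr (g := fun x => x ^ m)
          (fun x hx => by
            rw [Set.uIcc_of_le (by norm_num)] at hx
            simp [min_eq_left hx.2]),
          integral_pow]
        push_cast
        simp
      have h2 : (∫ x in (1:ℝ)..(Real.pi/2), (min x 1) ^ m) = Real.pi/2 - 1 := by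
        rw [intervalIntegral.integral_congr (g := fun _ => (1:ℝ))
          (fun x hx => by
            rw [Set.uIcc_of_le (by linarith)] at hx
            simp [min_eq_right hx.1]),
          intervalIntegral.integral_const]
        simp
      rw [hsplit, h1, h2]
    rw [hmin] at hup
    linarith
  · -- 2(1/(m+1) + π/2 - 1) < 4
    have hpilt : Real.pi < 3.15 := Real.pi_lt_d2
    have : (1:ℝ) / ((m:ℝ) + 1) ≤ 1/2 := by
      apply div_le_div_of_nonneg_left (by norm_num) (by norm_num)
      have : (1:ℝ) ≤ (m:ℝ) := by exact_mod_cast hm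
      linarith
    linarith
end

section
/- Let W be a subspace of ℝⁿ with orthogonal projection P, let u, u* ∈ ℝⁿ be nonzero, and let 0 ≤ γ₂ ≤ 1. If ⟨u, u*⟩² ≥ (1 − γ₂²)·‖u‖²·‖u*‖², then ‖(I − P)u*‖/‖u*‖ ≤ γ₂ + ‖(I − P)u‖/‖u‖. -/
open Matrix

lemma symm_dot {n : ℕ} (Q : Matrix (Fin n) (Fin n) ℝ) (hQ : Qᵀ = Q) (x y : Fin n → ℝ) :
    (Q *ᵥ x) ⬝ᵥ y = x ⬝ᵥ (Q *ᵥ y) := by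
  rw [dotProduct_comm, dotProduct_mulVec, ← hQ, vecMul_transpose, dotProduct_comm, hQ]

lemma contraction {n : ℕ} (P : Matrix (Fin n) (Fin n) ℝ) (hPsymm : Pᵀ = P) (hPidem : P * P = P)
    (x : Fin n → ℝ) : ((1 - P) *ᵥ x) ⬝ᵥ ((1 - P) *ᵥ x) ≤ x ⬝ᵥ x := by
  have hQsymm : (1 - P)ᵀ = 1 - P := by simp [transpose_sub, hPsymm]
  have hQidem : (1 - P) * (1 - P) = 1 - P := by simp [mul_sub, sub_mul, hPidem]
  have h1 : ((1 - P) *ᵥ x) ⬝ᵥ ((1 - P) *ᵥ x) = x ⬝ᵥ ((1 - P) *ᵥ x) := by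
    rw [symm_dot _ hQsymm, mulVec_mulVec, hQidem]
  have h2 : (P *ᵥ x) ⬝ᵥ (P *ᵥ x) = x ⬝ᵥ (P *ᵥ x) := by
    rw [symm_dot _ hPsymm, mulVec_mulVec, hPidem]
  have h3 : (0:ℝ) ≤ (P *ᵥ x) ⬝ᵥ (P *ᵥ x) := by
    simp only [dotProduct]
    exact Finset.sum_nonneg fun i _ => mul_self_nonneg _
  have h4 : x ⬝ᵥ ((1 - P) *ᵥ x) = x ⬝ᵥ x - x ⬝ᵥ (P *ᵥ x) := by
    simp [sub_mulVec, dotProduct_sub]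
  nlinarith [h1, h2, h3, h4]

lemma aux {E : Type*} [NormedAddCommGroup E] [InnerProductSpace ℝ E]
    (u us tu tus : E) (hu : u ≠ 0) (hus : us ≠ 0)
    (γ : ℝ) (hγ : 0 ≤ γ)
    (hT : ‖tus - ((inner ℝ u us : ℝ) / ‖u‖^2) • tu‖ ≤ ‖us - ((inner ℝ u us : ℝ) / ‖u‖^2) • u‖)
    (h : (1 - γ^2) * ‖u‖^2 * ‖us‖^2 ≤ (inner ℝ u us : ℝ)^2) :
    ‖tus‖ / ‖us‖ ≤ γ + ‖tu‖ / ‖u‖ := by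
  have ha : 0 < ‖u‖ := norm_pos_iff.mpr hu
  have hb : 0 < ‖us‖ := norm_pos_iff.mpr hus
  set a := ‖u‖ with hadef
  set b := ‖us‖ with hbdef
  set t : ℝ := inner ℝ u us with htdef
  set c : ℝ := t / a ^ 2 with hc
  have hw2 : ‖us - c • u‖ ^ 2 = b ^ 2 - t ^ 2 / a ^ 2 := by
    have h1 : ‖us - c • u‖ ^ 2 = b ^ 2 - 2 * (c * t) + c ^ 2 * a ^ 2 := by
      rw [norm_sub_sq_real, real_inner_smul_right, real_inner_comm, norm_smul,
        Real.norm_eq_abs, mul_pow, sq_abs, ← htdef, ← hadef, ← hbdef]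
    rw [h1, hc]
    field_simp
    ring
  have hcs : t ^ 2 ≤ a ^ 2 * b ^ 2 := by
    have h2 := abs_real_inner_le_norm u us
    nlinarith [abs_nonneg t, sq_abs t]
  have hwb : ‖us - c • u‖ ≤ γ * b := by
    have hle : ‖us - c • u‖ ^ 2 ≤ (γ * b) ^ 2 := by
      rw [hw2]
      have ha2 : (0:ℝ) < a ^ 2 := by positivity
      have hta : (1 - γ ^ 2) * b ^ 2 ≤ t ^ 2 / a ^ 2 := by
        rw [le_div_iff₀ ha2]; nlinarith
      nlinarith [hta]
    have := Real.sqrt_le_sqrt hle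
    rwa [Real.sqrt_sq (norm_nonneg _), Real.sqrt_sq (by positivity)] at this
  have hcba : |c| ≤ b / a := by
    rw [hc, abs_div, abs_of_pos (by positivity : (0:ℝ) < a ^ 2),
      div_le_div_iff₀ (by positivity) ha]
    have : |t| ≤ a * b := by
      have := abs_real_inner_le_norm u us
      simpa [htdef, hadef, hbdef] using this
    nlinarith [abs_nonneg t]
  have htri : ‖tus‖ ≤ |c| * ‖tu‖ + ‖us - c • u‖ := by
    calc ‖tus‖ = ‖c • tu + (tus - c • tu)‖ := by rw [add_sub_cancel]
      _ ≤ ‖c • tu‖ + ‖tus - c • tu‖ := norm_add_le _ _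
      _ = |c| * ‖tu‖ + ‖tus - c • tu‖ := by rw [norm_smul, Real.norm_eq_abs]
      _ ≤ |c| * ‖tu‖ + ‖us - c • u‖ := by linarith [hT]
  have hfin : ‖tus‖ ≤ (b / a) * ‖tu‖ + γ * b := by
    have : |c| * ‖tu‖ ≤ (b / a) * ‖tu‖ :=
      mul_le_mul_of_nonneg_right hcba (norm_nonneg _)
    linarith
  rw [div_le_iff₀ hb]
  have heq : (γ + ‖tu‖ / a) * b = (b / a) * ‖tu‖ + γ * b := by
    field_simp
    ring
  linarith [hfin, heq.ge]

lemma norm_symm {n : ℕ} (x : Fin n → ℝ) :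
    ‖(WithLp.linearEquiv 2 ℝ (Fin n → ℝ)).symm x‖ = Real.sqrt (x ⬝ᵥ x) := by
  rw [EuclideanSpace.norm_eq]
  congr 1
  simp [dotProduct, sq, Real.norm_eq_abs, ← abs_mul, abs_mul_self]

lemma inner_symm {n : ℕ} (x y : Fin n → ℝ) :
    (inner ℝ ((WithLp.linearEquiv 2 ℝ (Fin n → ℝ)).symm x)
      ((WithLp.linearEquiv 2 ℝ (Fin n → ℝ)).symm y) : ℝ) = x ⬝ᵥ y := by
  simp [PiLp.inner_apply, RCLike.inner_apply, dotProduct, mul_comm]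

/-- Deterministic stability of the normalized residual (from the proof of Lemma 7):
if `u, u*` are nonzero and `⟨u, u*⟩² ≥ (1 − γ₂²)‖u‖²‖u*‖²` with `0 ≤ γ₂ ≤ 1`, then
`‖(I − P)u*‖/‖u*‖ ≤ γ₂ + ‖(I − P)u‖/‖u‖` for any orthogonal projection matrix `P`. -/
theorem residual_fraction_stable
    {n : ℕ} (P : Matrix (Fin n) (Fin n) ℝ) (hPsymm : Pᵀ = P) (hPidem : P * P = P)
    (u ustar : Fin n → ℝ) (hu : u ≠ 0) (hustar : ustar ≠ 0)
    (γ₂ : ℝ) (hγ₂0 : 0 ≤ γ₂) (hγ₂1 : γ₂ ≤ 1)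
    (h : (1 - γ₂ ^ 2) * (u ⬝ᵥ u) * (ustar ⬝ᵥ ustar) ≤ (u ⬝ᵥ ustar) ^ 2) :
    Real.sqrt ((1 - P).mulVec ustar ⬝ᵥ (1 - P).mulVec ustar) /
        Real.sqrt (ustar ⬝ᵥ ustar) ≤
      γ₂ + Real.sqrt ((1 - P).mulVec u ⬝ᵥ (1 - P).mulVec u) / Real.sqrt (u ⬝ᵥ u) := by
  set e := (WithLp.linearEquiv 2 ℝ (Fin n → ℝ)).symm with he
  have hdotu : (0:ℝ) ≤ u ⬝ᵥ u :=
    Finset.sum_nonneg fun i _ => mul_self_nonneg _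
  have hdotus : (0:ℝ) ≤ ustar ⬝ᵥ ustar :=
    Finset.sum_nonneg fun i _ => mul_self_nonneg _
  have hu' : e u ≠ 0 := fun h0 => hu ((LinearEquiv.map_eq_zero_iff _).mp h0)
  have hus' : e ustar ≠ 0 := fun h0 => hustar ((LinearEquiv.map_eq_zero_iff _).mp h0)
  have hT : ∀ c : ℝ,
      ‖e ((1 - P) *ᵥ ustar) - c • e ((1 - P) *ᵥ u)‖ ≤ ‖e ustar - c • e u‖ := by
    intro c
    have h1 : e ((1 - P) *ᵥ ustar) - c • e ((1 - P) *ᵥ u)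
        = e ((1 - P) *ᵥ (ustar - c • u)) := by
      rw [mulVec_sub, mulVec_smul, map_sub, _root_.map_smul]
    have h2 : e ustar - c • e u = e (ustar - c • u) := by
      rw [map_sub, _root_.map_smul]
    rw [h1, h2, norm_symm, norm_symm]
    exact Real.sqrt_le_sqrt (contraction P hPsymm hPidem _)
  have key := aux (e u) (e ustar) (e ((1 - P) *ᵥ u)) (e ((1 - P) *ᵥ ustar))
    hu' hus' γ₂ hγ₂0 (hT _) ?_
  · rw [norm_symm, norm_symm, norm_symm, norm_symm] at key
    exact key
  · rw [norm_symm, norm_symm, inner_symm, Real.sq_sqrt hdotu, Real.sq_sqrt hdotus]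
    exact h
end
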